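/- arXiv:2507.00859 — 8 statements merged into one kernel-verified Lean document; each statement's English description precedes it below -/
import Mathlib

section
/- Let K be a nonempty convex subset of a real Banach space X and S : K → K a map satisfying ‖Sx − Sy‖ ≤ L₀‖x−y‖ + ω(‖x−y‖) for all x,y ∈ K, where L₀ > 1 and ω is a modulus of continuity. Then for every ε ∈ (0,1) there exist δ ∈ (0,1) and a map T : K → K defined by Tx = δ·Sx + (1−δ)x such that T satisfies ‖Tx − Ty‖ ≤ (1+ε)‖x−y‖ + ω(‖x−y‖) for all x,y ∈ K, T has the same fixed point set as S, and inf_{x∈K}‖x − Tx‖ = δ·inf_{x∈K}‖x − Sx‖. -/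
open Pointwise


/-- Proposition 3.4 / Goebel's trick: if `S : K → K` is `L₀`-`ω`-Lipschitz with
`L₀ > 1` on a nonempty convex subset `K` of a Banach space, then for each `ε ∈ (0,1)` there
are `δ ∈ (0,1)` and a `(1+ε)`-`ω`-Lipschitz map `T x = δ • S x + (1-δ) • x` of `K` into `K`
with the same fixed point set and minimal displacement `d(T,K) = δ * d(S,K)`. -/
theorem stmt4 {X : Type*} [NormedAddCommGroup X] [NormedSpace ℝ X] [CompleteSpace X]
    (K : Set X) (hne : K.Nonempty) (hconv : Convex ℝ K)
    (S : X → X) (hS : Set.MapsTo S K K)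
    (L₀ : ℝ) (hL₀ : 1 < L₀)
    (ω : ℝ → ℝ) (hωc : Continuous ω) (hω0 : ω 0 = 0) (hωnn : ∀ t, 0 ≤ ω t)
    (hSlip : ∀ x ∈ K, ∀ y ∈ K, ‖S x - S y‖ ≤ L₀ * ‖x - y‖ + ω ‖x - y‖)
    (ε : ℝ) (hε : ε ∈ Set.Ioo (0:ℝ) 1) :
    ∃ δ ∈ Set.Ioo (0:ℝ) 1, ∃ T : X → X,
      (∀ x, T x = δ • S x + (1 - δ) • x) ∧
      Set.MapsTo T K K ∧
      (∀ x ∈ K, ∀ y ∈ K, ‖T x - T y‖ ≤ (1 + ε) * ‖x - y‖ + ω ‖x - y‖) ∧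
      {x ∈ K | T x = x} = {x ∈ K | S x = x} ∧
      sInf ((fun x => ‖x - T x‖) '' K) = δ * sInf ((fun x => ‖x - S x‖) '' K) := by
  obtain ⟨hε0, hε1⟩ := hε
  have hL : 0 < L₀ - 1 := by linarith
  set δ : ℝ := ε / (L₀ - 1 + ε) with hδdef
  have hden : 0 < L₀ - 1 + ε := by linarith
  have hδ0 : 0 < δ := div_pos hε0 hden
  have hδ1 : δ < 1 := (div_lt_one hden).mpr (by linarith)
  refine ⟨δ, ⟨hδ0, hδ1⟩, fun x => δ • S x + (1 - δ) • x, fun x => rfl, ?_, ?_, ?_, ?_⟩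
  · intro x hx
    exact hconv (hS hx) hx hδ0.le (by linarith) (by ring)
  · intro x hx y hy
    have key : δ • S x + (1 - δ) • x - (δ • S y + (1 - δ) • y)
        = δ • (S x - S y) + (1 - δ) • (x - y) := by
      simp [smul_sub]; abel
    rw [key]
    have h1 : ‖δ • (S x - S y) + (1 - δ) • (x - y)‖
        ≤ δ * ‖S x - S y‖ + (1 - δ) * ‖x - y‖ := by
      refine (norm_add_le _ _).trans ?_
      rw [norm_smul, norm_smul, Real.norm_of_nonneg hδ0.le,
        Real.norm_of_nonneg (by linarith : (0:ℝ) ≤ 1 - δ)]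
    refine h1.trans ?_
    have h2 : δ * ‖S x - S y‖ ≤ δ * (L₀ * ‖x - y‖ + ω ‖x - y‖) :=
      mul_le_mul_of_nonneg_left (hSlip x hx y hy) hδ0.le
    have hδL : δ * (L₀ - 1) ≤ ε := by
      rw [hδdef, div_mul_eq_mul_div, div_le_iff₀ hden]
      nlinarith [norm_nonneg (x - y)]
    have hδω : δ * ω ‖x - y‖ ≤ ω ‖x - y‖ := by
      nlinarith [hωnn ‖x - y‖]
    nlinarith [norm_nonneg (x - y), hωnn ‖x - y‖]
  · ext x
    simp only [Set.mem_setOf_eq, and_congr_right_iff]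
    intro hx
    constructor
    · intro h
      have h2 : δ • (S x - x) = 0 := by
        have h3 : δ • (S x - x) = (δ • S x + (1 - δ) • x) - x := by
          rw [sub_smul, one_smul, smul_sub]; abel
        rw [h3, h, sub_self]
      have := (smul_eq_zero.mp h2).resolve_left (ne_of_gt hδ0)
      rwa [sub_eq_zero] at this
    · intro h
      rw [h, sub_smul, one_smul]; abel
  · have himg : ((fun x => ‖x - (δ • S x + (1 - δ) • x)‖) '' K)
        = (fun r => δ * r) '' ((fun x => ‖x - S x‖) '' K) := by
      rw [Set.image_image]
      refine Set.image_congr fun x _ => ?_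
      have : x - (δ • S x + (1 - δ) • x) = δ • (x - S x) := by
        rw [sub_smul, one_smul, smul_sub]; abel
      rw [this, norm_smul, Real.norm_of_nonneg hδ0.le]
    rw [himg]
    have hsmul : (fun r => δ * r) '' ((fun x => ‖x - S x‖) '' K)
        = δ • ((fun x => ‖x - S x‖) '' K) := by
      ext r; simp [Set.mem_smul_set, smul_eq_mul]
    rw [hsmul, Real.sInf_smul_of_nonneg hδ0.le, smul_eq_mul]
end

section
/- The function f(r) = r·|log₁₀(r^σ)| on [0,1] (with f(0)=0), where σ ∈ (0,1], satisfies |f(r) − f(s)| ≤ |r−s|·( (2σ)/ln 10 + |log₁₀|r−s|| ) for all r, s ∈ [0,1] with r ≠ s. In particular, ω_f(δ) ≤ δ(L + |log₁₀ δ|) for all δ ∈ (0,1], where L = 2/ln 10 < 1. -/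
private lemma div_le_div_of_nonneg_right' {a b c : ℝ} (h : a ≤ b) (hc : 0 < c) :
    a / c ≤ b / c := by
  exact (div_le_div_iff_of_pos_right hc).mpr h

private lemma log10pos : (0:ℝ) < Real.log 10 := Real.log_pos (by norm_num)

private lemma glem (r s : ℝ) (hs0 : 0 ≤ s) (hsr : s < r) (hr1 : r ≤ 1) :
    |(-(r * Real.log r)) - (-(s * Real.log s))| ≤ (r - s) * (1 + |Real.log (r - s)|) := by
  have hr0 : 0 < r := lt_of_le_of_lt hs0 hsr
  have hh0 : 0 < r - s := sub_pos.mpr hsr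
  have hlogr : Real.log r ≤ 0 := Real.log_nonpos hr0.le hr1
  have h1 : -Real.log r ≤ |Real.log (r - s)| := by
    have h1a : Real.log (r - s) ≤ Real.log r := Real.log_le_log hh0 (by linarith)
    have := neg_abs_le (Real.log (r - s))
    linarith
  have h2a : s * (Real.log r - Real.log s) ≤ r - s := by
    rcases eq_or_lt_of_le hs0 with h | hs
    · simp [← h]; linarith
    · have hd := Real.log_le_sub_one_of_pos (show 0 < r / s from div_pos hr0 hs)
      rw [Real.log_div hr0.ne' hs.ne'] at hd
      have := mul_le_mul_of_nonneg_left hd hs.le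
      calc s * (Real.log r - Real.log s) ≤ s * (r / s - 1) := this
      _ = r - s := by field_simp
  have h2b : 0 ≤ s * (Real.log r - Real.log s) := by
    rcases eq_or_lt_of_le hs0 with h | hs
    · simp [← h]
    · have : Real.log s ≤ Real.log r := Real.log_le_log hs hsr.le
      nlinarith
  have hid : -(r * Real.log r) - (-(s * Real.log s)) =
      -((r - s) * Real.log r) - s * (Real.log r - Real.log s) := by ring
  rw [hid, abs_le]
  have habs : 0 ≤ |Real.log (r-s)| := abs_nonneg _
  constructor
  · nlinarith
  · nlinarith

private lemma fform (σ : ℝ) (hσ0 : 0 < σ) {r : ℝ} (hr0 : 0 ≤ r) (hr1 : r ≤ 1) :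
    r * |Real.logb 10 (r ^ σ)| = σ / Real.log 10 * (-(r * Real.log r)) := by
  rcases eq_or_lt_of_le hr0 with h | hr
  · rw [← h]
    rw [Real.zero_rpow hσ0.ne']
    norm_num
  · have hlogr : Real.log r ≤ 0 := Real.log_nonpos hr.le hr1
    rw [Real.logb, Real.log_rpow hr]
    rw [abs_div, abs_of_pos log10pos, abs_mul, abs_of_pos hσ0, abs_of_nonpos hlogr]
    ring

private lemma part1aux (σ : ℝ) (hσ0 : 0 < σ) (hσ1 : σ ≤ 1) {r s : ℝ} (hs0 : 0 ≤ s)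
    (hsr : s < r) (hr1 : r ≤ 1) :
    abs (r * abs (Real.logb 10 (r ^ σ)) - s * abs (Real.logb 10 (s ^ σ)))
      ≤ abs (r - s) * (2 * σ / Real.log 10 + abs (Real.logb 10 (abs (r - s)))) := by
  have hr0 : 0 < r := lt_of_le_of_lt hs0 hsr
  have hh0 : 0 < r - s := sub_pos.mpr hsr
  rw [fform σ hσ0 hr0.le hr1, fform σ hσ0 hs0 (by linarith)]
  rw [abs_of_pos hh0]
  have key := glem r s hs0 hsr hr1
  have hL : 0 < Real.log 10 := log10pos
  rw [← mul_sub, abs_mul, abs_of_pos (show 0 < σ / Real.log 10 from div_pos hσ0 hL)]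
  have hlogb : |Real.logb 10 (r - s)| = |Real.log (r - s)| / Real.log 10 := by
    rw [Real.logb, abs_div, abs_of_pos hL]
  rw [hlogb]
  have habs : 0 ≤ |Real.log (r-s)| := abs_nonneg _
  have hG : 0 ≤ |(-(r * Real.log r)) - (-(s * Real.log s))| := abs_nonneg _
  have main : σ * |(-(r * Real.log r)) - (-(s * Real.log s))|
      ≤ (r - s) * (2 * σ + |Real.log (r - s)|) := by
    nlinarith [mul_le_mul_of_nonneg_left key hσ0.le,
      mul_nonneg (mul_nonneg (sub_nonneg.mpr hsr.le) (sub_nonneg.mpr hσ1)) habs,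
      mul_pos hh0 hσ0]
  rw [show σ / Real.log 10 * |(-(r * Real.log r)) - (-(s * Real.log s))|
      = σ * |(-(r * Real.log r)) - (-(s * Real.log s))| / Real.log 10 by ring,
    show (r - s) * (2 * σ / Real.log 10 + |Real.log (r - s)| / Real.log 10)
      = (r - s) * (2 * σ + |Real.log (r - s)|) / Real.log 10 by ring]
  exact div_le_div_of_nonneg_right' main hL

/-- Example 4.1: the function `f r = r * |log₁₀ (r^σ)|` with `σ ∈ (0,1]`
satisfies `|f r - f s| ≤ |r-s| * (2σ/ln 10 + |log₁₀ |r-s||)` for distinct `r, s ∈ [0,1]`;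
in particular `ω_f δ ≤ δ * (2/ln 10 + |log₁₀ δ|)` for `δ ∈ (0,1]`. -/
theorem stmt5 (σ : ℝ) (hσ : σ ∈ Set.Ioc (0:ℝ) 1) :
    (∀ r ∈ Set.Icc (0:ℝ) 1, ∀ s ∈ Set.Icc (0:ℝ) 1, r ≠ s →
      abs (r * abs (Real.logb 10 (r ^ σ)) - s * abs (Real.logb 10 (s ^ σ)))
        ≤ abs (r - s) * (2 * σ / Real.log 10 + abs (Real.logb 10 (abs (r - s))))) ∧
    (∀ δ ∈ Set.Ioc (0:ℝ) 1, ∀ r ∈ Set.Icc (0:ℝ) 1, ∀ s ∈ Set.Icc (0:ℝ) 1, abs (r - s) ≤ δ →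
      abs (r * abs (Real.logb 10 (r ^ σ)) - s * abs (Real.logb 10 (s ^ σ)))
        ≤ δ * (2 / Real.log 10 + abs (Real.logb 10 δ))) := by
  obtain ⟨hσ0, hσ1⟩ := hσ
  have part1 : ∀ r ∈ Set.Icc (0:ℝ) 1, ∀ s ∈ Set.Icc (0:ℝ) 1, r ≠ s →
      abs (r * abs (Real.logb 10 (r ^ σ)) - s * abs (Real.logb 10 (s ^ σ)))
        ≤ abs (r - s) * (2 * σ / Real.log 10 + abs (Real.logb 10 (abs (r - s)))) := by
    intro r hr s hs hne
    rcases lt_or_gt_of_ne hne with h | h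
    · rw [abs_sub_comm (r * _), abs_sub_comm r s]
      exact part1aux σ hσ0 hσ1 hr.1 h hs.2
    · exact part1aux σ hσ0 hσ1 hs.1 h hr.2
  refine ⟨part1, ?_⟩
  intro δ hδ r hr s hs hrs
  have hL : 0 < Real.log 10 := log10pos
  rcases eq_or_ne r s with h | hne
  · rw [h, sub_self, abs_zero]
    have : 0 ≤ 2 / Real.log 10 + |Real.logb 10 δ| := by positivity
    nlinarith [hδ.1, abs_nonneg (Real.logb 10 δ)]
  · have hb := part1 r hr s hs hne
    set h := |r - s| with hh
    have hh0 : 0 < h := abs_pos.mpr (sub_ne_zero.mpr hne)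
    have hh1 : h ≤ 1 := le_trans hrs hδ.2
    have hδ0 : 0 < δ := hδ.1
    have hlogh : Real.log h ≤ 0 := Real.log_nonpos hh0.le hh1
    have hlogδ : Real.log δ ≤ 0 := Real.log_nonpos hδ0.le hδ.2
    have habsh : |Real.logb 10 h| = -Real.log h / Real.log 10 := by
      rw [Real.logb, abs_div, abs_of_pos hL, abs_of_nonpos hlogh]
    have habsδ : |Real.logb 10 δ| = -Real.log δ / Real.log 10 := by
      rw [Real.logb, abs_div, abs_of_pos hL, abs_of_nonpos hlogδ]
    have hmono : h * (2 * σ - Real.log h) ≤ δ * (2 - Real.log δ) := by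
      have hd := Real.log_le_sub_one_of_pos (show 0 < δ / h from div_pos hδ0 hh0)
      rw [Real.log_div hδ0.ne' hh0.ne'] at hd
      have hd2 : h * (Real.log δ - Real.log h) ≤ δ - h := by
        have := mul_le_mul_of_nonneg_left hd hh0.le
        calc h * (Real.log δ - Real.log h) ≤ h * (δ / h - 1) := this
        _ = δ - h := by field_simp
      nlinarith
    calc abs (r * abs (Real.logb 10 (r ^ σ)) - s * abs (Real.logb 10 (s ^ σ)))
        ≤ h * (2 * σ / Real.log 10 + |Real.logb 10 h|) := hb
      _ ≤ δ * (2 / Real.log 10 + |Real.logb 10 δ|) := by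
          rw [habsh, habsδ,
            show h * (2 * σ / Real.log 10 + -Real.log h / Real.log 10)
              = h * (2 * σ - Real.log h) / Real.log 10 by ring,
            show δ * (2 / Real.log 10 + -Real.log δ / Real.log 10)
              = δ * (2 - Real.log δ) / Real.log 10 by ring]
          exact div_le_div_of_nonneg_right' hmono hL
end

section
/- The function f(r) = (1−r)·cos(r·|log₁₀ r|) on (0,1], extended by f(0) = 1, satisfies |f(r) − f(s)| ≤ |r−s|·( 1 + 2/ln 10 + |log₁₀|r−s|| ) for all distinct r, s ∈ [0,1]; i.e., f is 2-log-Lipschitz on [0,1]. -/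
open Real Set

lemma cos_lip (a b : ℝ) : |Real.cos a - Real.cos b| ≤ |a - b| := by
  rw [Real.cos_sub_cos]
  have h1 : |Real.sin ((a + b) / 2)| ≤ 1 := Real.abs_sin_le_one _
  have h2 : |Real.sin ((a - b) / 2)| ≤ |(a - b) / 2| := Real.abs_sin_le_abs
  have h3 : |(a - b) / 2| = |a - b| / 2 := by
    rw [abs_div]; norm_num
  rw [abs_mul, abs_mul]
  have h4 : |(-2 : ℝ)| = 2 := by norm_num
  rw [h4]
  nlinarith [abs_nonneg (Real.sin ((a + b) / 2)), abs_nonneg (Real.sin ((a - b) / 2)),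
    abs_nonneg (a - b)]

lemma phi_anti : AntitoneOn (fun x : ℝ => x * Real.log x - x) (Set.Ioc 0 1) := by
  apply antitoneOn_of_deriv_nonpos (convex_Ioc 0 1)
  · exact (Real.continuous_mul_log.sub continuous_id).continuousOn
  · intro x hx
    rw [interior_Ioc] at hx
    exact ((Real.hasDerivAt_mul_log hx.1.ne').sub (hasDerivAt_id' x)).differentiableAt.differentiableWithinAt
  · intro x hx
    rw [interior_Ioc] at hx
    rw [HasDerivAt.deriv (f := fun x => x * Real.log x - x) ((Real.hasDerivAt_mul_log hx.1.ne').sub (hasDerivAt_id' x))]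
    have := Real.log_nonpos hx.1.le hx.2.le
    simpa using this

lemma h_lower (s r : ℝ) (hs : 0 ≤ s) (hr : r ≤ 1) (hsr : s < r) :
    r * Real.log r - s * Real.log s ≤ r - s := by
  rcases eq_or_lt_of_le hs with h0 | h0
  · subst h0
    simp only [Real.log_zero, mul_zero, sub_zero]
    have h1 : Real.log r ≤ 0 := Real.log_nonpos hsr.le hr
    nlinarith
  · have := phi_anti ⟨h0, (hsr.le.trans hr)⟩ ⟨h0.trans hsr, hr⟩ hsr.le
    simp only at this
    linarith

lemma h_upper (s r : ℝ) (hs : 0 ≤ s) (hsr : s < r) :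
    s * Real.log s - r * Real.log r ≤ -((r - s) * Real.log (r - s)) := by
  set t := r - s with ht_def
  have ht : 0 < t := by simp [ht_def]; linarith
  have h1 : s * Real.log s ≤ s * Real.log r := by
    rcases eq_or_lt_of_le hs with h0 | h0
    · simp [← h0]
    · exact mul_le_mul_of_nonneg_left (Real.log_le_log h0 hsr.le) hs
  have h2 : t * Real.log t ≤ t * Real.log r := by
    apply mul_le_mul_of_nonneg_left (Real.log_le_log ht (by linarith)) ht.le
  have h4 : s * Real.log r + t * Real.log r = r * Real.log r := by
    have h3 : s + t = r := by simp [ht_def]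
    rw [← h3]; ring
  linarith

lemma h_diff (s r : ℝ) (hs : 0 ≤ s) (hr : r ≤ 1) (hsr : s < r) :
    |(-(r * Real.log r)) - (-(s * Real.log s))| ≤ (r - s) * (1 + |Real.log (r - s)|) := by
  have ht : 0 < r - s := by linarith
  rw [abs_le]
  constructor
  · have := h_lower s r hs hr hsr
    nlinarith [abs_nonneg (Real.log (r - s))]
  · have := h_upper s r hs hsr
    nlinarith [neg_abs_le (Real.log (r - s)), abs_nonneg (Real.log (r - s))]

lemma G_eq (r : ℝ) (h0 : 0 ≤ r) (h1 : r ≤ 1) :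
    r * |Real.logb 10 r| = -(r * Real.log r) / Real.log 10 := by
  have hL : (0:ℝ) < Real.log 10 := Real.log_pos (by norm_num)
  have hl : Real.log r ≤ 0 := by
    rcases eq_or_lt_of_le h0 with h | h
    · simp [← h]
    · exact Real.log_nonpos h0 h1
  rw [Real.logb, abs_div, abs_of_nonpos hl, abs_of_pos hL]
  field_simp

lemma helper (s r : ℝ) (hs : s ∈ Set.Icc (0:ℝ) 1) (hr : r ∈ Set.Icc (0:ℝ) 1) (hsr : s < r) :
    abs ((1 - r) * Real.cos (r * abs (Real.logb 10 r))
        - (1 - s) * Real.cos (s * abs (Real.logb 10 s)))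
      ≤ abs (r - s) * (1 + 2 / Real.log 10 + abs (Real.logb 10 (abs (r - s)))) := by
  obtain ⟨hs0, hs1⟩ := hs
  obtain ⟨hr0, hr1⟩ := hr
  have ht : 0 < r - s := by linarith
  have htabs : |r - s| = r - s := abs_of_pos ht
  have hL : (0:ℝ) < Real.log 10 := Real.log_pos (by norm_num)
  set Gr := r * |Real.logb 10 r| with hGr
  set Gs := s * |Real.logb 10 s| with hGs
  have hGdiff : |Gr - Gs| ≤ (r - s) * (1 + |Real.log (r - s)|) / Real.log 10 := by
    rw [hGr, hGs, G_eq r hr0 hr1, G_eq s hs0 hs1, div_sub_div_same, abs_div, abs_of_pos hL]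
    exact (div_le_div_iff_of_pos_right hL).mpr (h_diff s r hs0 hr1 hsr)
  have hlogb : |Real.logb 10 (r - s)| = |Real.log (r - s)| / Real.log 10 := by
    rw [Real.logb, abs_div, abs_of_pos hL]
  have hcos : |Real.cos Gr - Real.cos Gs| ≤ |Gr - Gs| := cos_lip Gr Gs
  have hdecomp : (1 - r) * Real.cos Gr - (1 - s) * Real.cos Gs
      = (s - r) * Real.cos Gr + (1 - s) * (Real.cos Gr - Real.cos Gs) := by ring
  have habs : |(1 - r) * Real.cos Gr - (1 - s) * Real.cos Gs|
      ≤ (r - s) + (1 - s) * |Real.cos Gr - Real.cos Gs| := by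
    rw [hdecomp]
    calc |(s - r) * Real.cos Gr + (1 - s) * (Real.cos Gr - Real.cos Gs)|
        ≤ |(s - r) * Real.cos Gr| + |(1 - s) * (Real.cos Gr - Real.cos Gs)| := abs_add_le _ _
      _ ≤ (r - s) + (1 - s) * |Real.cos Gr - Real.cos Gs| := by
          rw [abs_mul, abs_mul, abs_of_nonneg (by linarith : (0:ℝ) ≤ 1 - s)]
          have h1 : |s - r| = r - s := by rw [abs_sub_comm, htabs]
          rw [h1]
          nlinarith [Real.abs_cos_le_one Gr, abs_nonneg (Real.cos Gr), ht]
  have hstep : (1 - s) * |Real.cos Gr - Real.cos Gs| ≤ |Gr - Gs| := by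
    have h2 : (1 - s) * |Real.cos Gr - Real.cos Gs| ≤ 1 * |Real.cos Gr - Real.cos Gs| :=
      mul_le_mul_of_nonneg_right (by linarith) (abs_nonneg _)
    linarith
  rw [htabs, hlogb]
  have hfin : (r - s) + (r - s) * (1 + |Real.log (r - s)|) / Real.log 10
      ≤ (r - s) * (1 + 2 / Real.log 10 + |Real.log (r - s)| / Real.log 10) := by
    have e : (r - s) * (1 + 2 / Real.log 10 + |Real.log (r - s)| / Real.log 10)
        - ((r - s) + (r - s) * (1 + |Real.log (r - s)|) / Real.log 10)
        = (r - s) * (1 / Real.log 10) := by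
      field_simp
      ring
    nlinarith [mul_pos ht (one_div_pos.mpr hL)]
  calc |(1 - r) * Real.cos Gr - (1 - s) * Real.cos Gs|
      ≤ (r - s) + (1 - s) * |Real.cos Gr - Real.cos Gs| := habs
    _ ≤ (r - s) + |Gr - Gs| := by linarith
    _ ≤ (r - s) + (r - s) * (1 + |Real.log (r - s)|) / Real.log 10 := by linarith
    _ ≤ (r - s) * (1 + 2 / Real.log 10 + |Real.log (r - s)| / Real.log 10) := hfin

/-- Example 4.2: the function `f r = (1 - r) * cos (r * |log₁₀ r|)` (with the
convention `log₁₀ 0 = 0`, so `f 0 = 1`) satisfies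
`|f r - f s| ≤ |r - s| * (1 + 2/ln 10 + |log₁₀ |r - s||)` for distinct `r, s ∈ [0,1]`,
i.e. `f` is `2`-log-Lipschitz on `[0,1]`. -/
theorem stmt6 :
    ∀ r ∈ Set.Icc (0:ℝ) 1, ∀ s ∈ Set.Icc (0:ℝ) 1, r ≠ s →
      abs ((1 - r) * Real.cos (r * abs (Real.logb 10 r))
          - (1 - s) * Real.cos (s * abs (Real.logb 10 s)))
        ≤ abs (r - s) * (1 + 2 / Real.log 10 + abs (Real.logb 10 (abs (r - s)))) := by
  intro r hr s hs hne
  rcases lt_or_gt_of_ne hne with h | h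
  · rw [abs_sub_comm ((1 - r) * _) _, abs_sub_comm r s]
    exact helper r s hr hs h
  · exact helper s r hs hr h
end

section
/- Let T : B_{ℓ²} → B_{ℓ²} be Kakutani's map T(x) = √(1 − ‖x‖²₂)·e₁ + L·Rx, where L ∈ (0,1], e₁ is the first unit vector, and R is the right shift Rx = (0, x₁, x₂, …). Then ‖Tx − Ty‖₂ ≤ L‖x − y‖₂ + √(2‖x − y‖₂) for all x, y in the closed unit ball of ℓ². -/
private lemma sqrt_sub_sqrt_le (a b : ℝ) (hb : 0 ≤ b) :
    Real.sqrt a - Real.sqrt b ≤ Real.sqrt (a - b) := by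
  rcases le_or_gt a b with h | h
  · have : Real.sqrt a ≤ Real.sqrt b := Real.sqrt_le_sqrt h
    have := Real.sqrt_nonneg (a - b)
    linarith
  · have h1 : (0:ℝ) ≤ a - b := by linarith
    have h2 : Real.sqrt (a - b) ^ 2 = a - b := Real.sq_sqrt h1
    have h3 : Real.sqrt b ^ 2 = b := Real.sq_sqrt hb
    have h4 : Real.sqrt a ≤ Real.sqrt (a - b) + Real.sqrt b := by
      have : Real.sqrt a ≤ Real.sqrt ((Real.sqrt (a - b) + Real.sqrt b) ^ 2) := by
        apply Real.sqrt_le_sqrt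
        nlinarith [Real.sqrt_nonneg (a - b), Real.sqrt_nonneg b]
      rwa [Real.sqrt_sq (by positivity)] at this
    linarith

/-- Example 4.6, Kakutani's map: if `Tx, Ty ∈ ℓ²` are the images of
`x, y ∈ B_{ℓ²}` under `T z = √(1 - ‖z‖²) e₁ + L • R z` (written coordinatewise), then
`‖Tx - Ty‖ ≤ L ‖x - y‖ + √(2 ‖x - y‖)`. -/
theorem stmt10 (L : ℝ) (hL : L ∈ Set.Ioc (0:ℝ) 1)
    (x y Tx Ty : lp (fun _ : ℕ => ℝ) 2)
    (hx : ‖x‖ ≤ 1) (hy : ‖y‖ ≤ 1)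
    (hTx0 : Tx 0 = Real.sqrt (1 - ‖x‖ ^ 2))
    (hTxs : ∀ n : ℕ, Tx (n + 1) = L * x n)
    (hTy0 : Ty 0 = Real.sqrt (1 - ‖y‖ ^ 2))
    (hTys : ∀ n : ℕ, Ty (n + 1) = L * y n) :
    ‖Tx - Ty‖ ≤ L * ‖x - y‖ + Real.sqrt (2 * ‖x - y‖) := by
  obtain ⟨hL0, hL1⟩ := hL
  have hp : 0 < (2 : ENNReal).toReal := by norm_num
  set c : ℝ := Real.sqrt (1 - ‖x‖ ^ 2) - Real.sqrt (1 - ‖y‖ ^ 2) with hc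
  set u : lp (fun _ : ℕ => ℝ) 2 := lp.single 2 0 c with hu
  set v : lp (fun _ : ℕ => ℝ) 2 := Tx - Ty - u with hv
  -- coordinates of v
  have hv0 : v 0 = 0 := by
    show (Tx - Ty - u) 0 = 0
    rw [lp.coeFn_sub, lp.coeFn_sub] at *
    simp only [Pi.sub_apply]
    rw [hTx0, hTy0, hu, lp.single_apply_self]
    simp [hc]
  have hvs : ∀ n : ℕ, v (n + 1) = L * ((x - y) n) := by
    intro n
    show (Tx - Ty - u) (n+1) = _
    rw [lp.coeFn_sub, lp.coeFn_sub, lp.coeFn_sub]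
    simp only [Pi.sub_apply]
    rw [hTxs, hTys, hu, lp.single_apply_ne (E := fun _ : ℕ => ℝ) 2 0 c (by simp : (n+1:ℕ) ≠ 0)]
    simp [mul_sub]
  -- ‖v‖ = L * ‖x - y‖
  have hnv : ‖v‖ = L * ‖x - y‖ := by
    have hsumv : Summable fun n => ‖v n‖ ^ (2 : ENNReal).toReal :=
      (lp.memℓp v).summable hp
    have hvsq : ‖v‖ ^ (2 : ENNReal).toReal = ∑' n, ‖v n‖ ^ (2 : ENNReal).toReal :=
      lp.norm_rpow_eq_tsum hp v
    have hdsq : ‖x - y‖ ^ (2 : ENNReal).toReal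
        = ∑' n, ‖(x - y) n‖ ^ (2 : ENNReal).toReal :=
      lp.norm_rpow_eq_tsum hp (x - y)
    have ht : (∑' n, ‖v n‖ ^ (2 : ENNReal).toReal)
        = L ^ (2 : ENNReal).toReal * ∑' n, ‖(x - y) n‖ ^ (2 : ENNReal).toReal := by
      rw [Summable.tsum_eq_zero_add hsumv]
      simp only [hv0, norm_zero]
      rw [Real.zero_rpow (by norm_num), zero_add, ← tsum_mul_left]
      congr 1; funext n
      rw [hvs n, norm_mul, Real.mul_rpow (norm_nonneg _) (norm_nonneg _),
        Real.norm_eq_abs, abs_of_pos hL0]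
    have h2 : ‖v‖ ^ (2 : ENNReal).toReal = (L * ‖x - y‖) ^ (2 : ENNReal).toReal := by
      rw [hvsq, ht, ← hdsq, ← Real.mul_rpow hL0.le (norm_nonneg _)]
    have hvnn : (0:ℝ) ≤ ‖v‖ := norm_nonneg _
    have hLd : (0:ℝ) ≤ L * ‖x - y‖ := by positivity
    exact Real.rpow_left_injOn hp.ne' hvnn hLd h2
  -- ‖u‖ = |c| ≤ √(2‖x-y‖)
  have hnu : ‖u‖ ≤ Real.sqrt (2 * ‖x - y‖) := by
    have : ‖u‖ = ‖c‖ := by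
      exact lp.norm_single (E := fun _ : ℕ => ℝ) (by norm_num : (0:ENNReal) < 2) 0 c
    rw [this, Real.norm_eq_abs]
    rw [abs_le]
    constructor
    · have h1 : Real.sqrt (1 - ‖y‖ ^ 2) - Real.sqrt (1 - ‖x‖ ^ 2)
          ≤ Real.sqrt ((1 - ‖y‖ ^ 2) - (1 - ‖x‖ ^ 2)) :=
        sqrt_sub_sqrt_le _ _ (by nlinarith [norm_nonneg x])
      have h2 : Real.sqrt ((1 - ‖y‖ ^ 2) - (1 - ‖x‖ ^ 2))
          ≤ Real.sqrt (2 * ‖x - y‖) := by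
        apply Real.sqrt_le_sqrt
        have hxy : |‖x‖ - ‖y‖| ≤ ‖x - y‖ := abs_norm_sub_norm_le x y
        have := abs_le.mp hxy
        nlinarith [norm_nonneg x, norm_nonneg y]
      simp only [hc]; linarith
    · have h1 : Real.sqrt (1 - ‖x‖ ^ 2) - Real.sqrt (1 - ‖y‖ ^ 2)
          ≤ Real.sqrt ((1 - ‖x‖ ^ 2) - (1 - ‖y‖ ^ 2)) :=
        sqrt_sub_sqrt_le _ _ (by nlinarith [norm_nonneg y])
      have h2 : Real.sqrt ((1 - ‖x‖ ^ 2) - (1 - ‖y‖ ^ 2))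
          ≤ Real.sqrt (2 * ‖x - y‖) := by
        apply Real.sqrt_le_sqrt
        have hxy : |‖x‖ - ‖y‖| ≤ ‖x - y‖ := abs_norm_sub_norm_le x y
        have := abs_le.mp hxy
        nlinarith [norm_nonneg x, norm_nonneg y]
      simp only [hc]; linarith
  have hdecomp : Tx - Ty = v + u := by rw [hv, sub_add_cancel]
  calc ‖Tx - Ty‖ = ‖v + u‖ := by rw [hdecomp]
    _ ≤ ‖v‖ + ‖u‖ := norm_add_le _ _
    _ ≤ L * ‖x - y‖ + Real.sqrt (2 * ‖x - y‖) := by rw [hnv]; linarith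
end

section
/- Let X be a real normed space with dim X ≥ 2, and ω : ℝ≥0 → ℝ≥0 a modulus of continuity with ω(1) = 0. Then a map T : B_X → B_X on the closed unit ball satisfies ‖Tx − Ty‖ ≤ ω(‖x − y‖) for all x, y ∈ B_X if and only if T is constant. -/
/-- Key lemma: for any `x` in the closed unit ball there is a unit vector `v`
with `‖x - v‖ = 1`. -/
lemma exists_unit_dist_one {X : Type*} [NormedAddCommGroup X] [NormedSpace ℝ X]
    (hdim : 2 ≤ Module.rank ℝ X) (x : X) (hx : ‖x‖ ≤ 1) :
    ∃ v : X, ‖v‖ = 1 ∧ ‖x - v‖ = 1 := by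
  have hrank : 1 < Module.rank ℝ X := lt_of_lt_of_le (by norm_num) hdim
  have hpc : IsPathConnected (Metric.sphere (0:X) 1) :=
    isPathConnected_sphere hrank 0 zero_le_one
  by_cases hx0 : x = 0
  · obtain ⟨v, hv, -⟩ := hpc
    simp only [Metric.mem_sphere, dist_zero_right] at hv
    exact ⟨v, hv, by simp [hx0, hv]⟩
  · have hnx : (0:ℝ) < ‖x‖ := norm_pos_iff.mpr hx0
    set u : X := (‖x‖)⁻¹ • x with hu
    have hu1 : ‖u‖ = 1 := by
      rw [hu, norm_smul, norm_inv, norm_norm, inv_mul_cancel₀ hnx.ne']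
    have hus : u ∈ Metric.sphere (0:X) 1 := by simpa using hu1
    have hnus : -u ∈ Metric.sphere (0:X) 1 := by simp [hu1]
    have hcont : ContinuousOn (fun v : X => ‖x - v‖) (Metric.sphere (0:X) 1) :=
      (continuous_const.sub continuous_id).norm.continuousOn
    have h1 : ‖x - u‖ = 1 - ‖x‖ := by
      have : x - u = ((‖x‖ - 1) / ‖x‖) • x := by
        rw [hu]; rw [sub_div, div_self hnx.ne', sub_smul, one_smul, div_eq_inv_mul,
          mul_comm, ← smul_smul]
        simp [smul_smul]
      rw [this, norm_smul, Real.norm_eq_abs, abs_div, abs_of_nonneg hnx.le,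
        div_mul_cancel₀ _ hnx.ne', abs_of_nonpos (by linarith)]
      ring
    have h2 : ‖x - (-u)‖ = 1 + ‖x‖ := by
      have : x - (-u) = ((‖x‖ + 1) / ‖x‖) • x := by
        rw [hu]; rw [sub_neg_eq_add, add_div, div_self hnx.ne', add_smul, one_smul,
          div_eq_inv_mul, mul_comm, ← smul_smul]
        simp [smul_smul]
      rw [this, norm_smul, Real.norm_eq_abs, abs_div, abs_of_nonneg hnx.le,
        div_mul_cancel₀ _ hnx.ne', abs_of_nonneg (by linarith)]
      ring
    have hmem : (1:ℝ) ∈ Set.Icc ‖x - u‖ ‖x - (-u)‖ := by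
      rw [h1, h2]; constructor <;> linarith
    have := hpc.isConnected.isPreconnected.intermediate_value hus hnus hcont hmem
    obtain ⟨v, hv, hv1⟩ := this
    simp only [Metric.mem_sphere, dist_zero_right] at hv
    exact ⟨v, hv, hv1⟩

/-- Theorem 5.6: let `X` be a real normed space with `dim X ≥ 2` and `ω` a
modulus of continuity with `ω 1 = 0`. A self-map `T` of the closed unit ball is
`ω`-nonexpansive iff it is constant on the ball. -/
theorem stmt12 {X : Type*} [NormedAddCommGroup X] [NormedSpace ℝ X]
    (hdim : 2 ≤ Module.rank ℝ X)
    (ω : ℝ → ℝ) (hωc : Continuous ω) (hωnn : ∀ t, 0 ≤ t → 0 ≤ ω t)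
    (hω0 : ω 0 = 0) (hω1 : ω 1 = 0)
    (T : X → X) (hT : Set.MapsTo T (Metric.closedBall 0 1) (Metric.closedBall 0 1)) :
    (∀ x ∈ Metric.closedBall (0:X) 1, ∀ y ∈ Metric.closedBall (0:X) 1,
        ‖T x - T y‖ ≤ ω ‖x - y‖) ↔
      (∀ x ∈ Metric.closedBall (0:X) 1, ∀ y ∈ Metric.closedBall (0:X) 1, T x = T y) := by
  constructor
  · intro h
    -- first: if ‖a - b‖ = 1 then T a = T b
    have key : ∀ a ∈ Metric.closedBall (0:X) 1, ∀ b ∈ Metric.closedBall (0:X) 1,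
        ‖a - b‖ = 1 → T a = T b := by
      intro a ha b hb hab
      have := h a ha b hb
      rw [hab, hω1] at this
      have := le_antisymm this (norm_nonneg _)
      exact sub_eq_zero.mp (norm_eq_zero.mp this)
    -- every point maps to T 0
    have main : ∀ x ∈ Metric.closedBall (0:X) 1, T x = T 0 := by
      intro x hx
      rw [Metric.mem_closedBall, dist_zero_right] at hx
      obtain ⟨v, hv1, hxv⟩ := exists_unit_dist_one hdim x hx
      have hvball : v ∈ Metric.closedBall (0:X) 1 := by
        simp [Metric.mem_closedBall, dist_zero_right, hv1]
      have h0ball : (0:X) ∈ Metric.closedBall (0:X) 1 := by simp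
      have hxball : x ∈ Metric.closedBall (0:X) 1 := by simpa using hx
      have e1 : T x = T v := key x hxball v hvball hxv
      have e2 : T v = T 0 := (key 0 h0ball v hvball (by simp [hv1])).symm
      rw [e1, e2]
    intro x hx y hy
    rw [main x hx, main y hy]
  · intro h x hx y hy
    rw [h x hx y hy, sub_self, norm_zero]
    exact hωnn _ (norm_nonneg _)
end

section
/- Let X be a real normed space of dimension ≥ 2 and let T : B_X → B_X satisfy ‖Tx − Ty‖ = 0 whenever ‖x − y‖ = 1. Then T is constant. -/
/-- if `X` is a real normed space of dimension `≥ 2` and `T : B_X → B_X`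
identifies any two points of the closed unit ball at distance exactly `1`, then `T` is
constant on the ball. -/
theorem stmt13 {X : Type*} [NormedAddCommGroup X] [NormedSpace ℝ X]
    (hdim : 2 ≤ Module.rank ℝ X)
    (T : X → X) (hT : Set.MapsTo T (Metric.closedBall 0 1) (Metric.closedBall 0 1))
    (h1 : ∀ x ∈ Metric.closedBall (0:X) 1, ∀ y ∈ Metric.closedBall (0:X) 1,
      ‖x - y‖ = 1 → T x = T y) :
    ∀ x ∈ Metric.closedBall (0:X) 1, ∀ y ∈ Metric.closedBall (0:X) 1, T x = T y := by
  have hdim' : 1 < Module.rank ℝ X := lt_of_lt_of_le (by norm_num) hdim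
  have hsph := isPathConnected_sphere hdim' (0:X) zero_le_one
  have h0 : (0:X) ∈ Metric.closedBall (0:X) 1 := by simp
  have sball : Metric.sphere (0:X) 1 ⊆ Metric.closedBall (0:X) 1 :=
    Metric.sphere_subset_closedBall
  have key : ∀ x ∈ Metric.closedBall (0:X) 1, T x = T 0 := by
    intro x hx
    have hx1 : ‖x‖ ≤ 1 := by simpa [dist_zero_right] using hx
    obtain ⟨u, hu, hxu⟩ : ∃ u ∈ Metric.sphere (0:X) 1, ‖x - u‖ = 1 := by
      by_cases hx0 : x = 0
      · obtain ⟨u, hu, -⟩ := hsph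
        refine ⟨u, hu, ?_⟩
        have := mem_sphere_zero_iff_norm.mp hu
        simp [hx0, this]
      · have hxn : ‖x‖ ≠ 0 := norm_ne_zero_iff.mpr hx0
        have hxpos : 0 < ‖x‖ := norm_pos_iff.mpr hx0
        set a : X := ‖x‖⁻¹ • x with ha
        have hna : ‖a‖ = 1 := by
          rw [ha, norm_smul, norm_inv, norm_norm, inv_mul_cancel₀ hxn]
        have has : a ∈ Metric.sphere (0:X) 1 := mem_sphere_zero_iff_norm.mpr hna
        have hnas : -a ∈ Metric.sphere (0:X) 1 := by
          rw [mem_sphere_zero_iff_norm, norm_neg, hna]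
        have hcont : ContinuousOn (fun v : X => ‖x - v‖) (Metric.sphere (0:X) 1) :=
          ((continuous_const.sub continuous_id).norm).continuousOn
        have hiv := hsph.isConnected.isPreconnected.intermediate_value has hnas hcont
        have hfa : ‖x - a‖ = 1 - ‖x‖ := by
          have : x - a = (1 - ‖x‖⁻¹) • x := by
            rw [ha, sub_smul, one_smul]
          rw [this, norm_smul, Real.norm_eq_abs]
          have h1x : ‖x‖⁻¹ ≥ 1 := by
            rw [ge_iff_le, le_inv_comm₀ one_pos hxpos]
            simpa using hx1
          rw [abs_of_nonpos (by linarith)]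
          field_simp
          ring
        have hfna : ‖x - (-a)‖ = 1 + ‖x‖ := by
          have : x - (-a) = (1 + ‖x‖⁻¹) • x := by
            rw [ha, sub_neg_eq_add, add_smul, one_smul]
          rw [this, norm_smul, Real.norm_eq_abs]
          have : (0:ℝ) < 1 + ‖x‖⁻¹ := by positivity
          rw [abs_of_pos this]
          field_simp
          ring
        have h1mem : (1:ℝ) ∈ Set.Icc (‖x - a‖) (‖x - (-a)‖) := by
          rw [hfa, hfna]; constructor <;> linarith [norm_nonneg x]
        obtain ⟨u, hu, hfu⟩ := hiv h1mem
        exact ⟨u, hu, hfu⟩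
    have h1u : T x = T u := h1 x hx u (sball hu) hxu
    have h2u : T u = T 0 := by
      refine h1 u (sball hu) 0 h0 ?_
      simpa using mem_sphere_zero_iff_norm.mp hu
    rw [h1u, h2u]
  intro x hx y hy
  rw [key x hx, key y hy]
end

section
/- Let K be the positive part of the closed unit ball of ℓ¹, i.e., K = { (tₙ) : tₙ ≥ 0, ∑ tₙ ≤ 1 }. If ω is a modulus of continuity with ω(1) = 0 and T : K → K satisfies ‖Tx − Ty‖₁ ≤ ω(‖x − y‖₁) for all x, y ∈ K, then T is constant. -/
namespace Stmt14Aux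

noncomputable abbrev E := lp (fun _ : ℕ => ℝ) 1

lemma habs (f : E) : HasSum (fun n => |f n|) ‖f‖ := by
  have h := lp.hasSum_norm (p := 1) (by norm_num) f
  simpa only [ENNReal.toReal_one, Real.rpow_one, Real.norm_eq_abs] using h

lemma norm1 (f : E) : ‖f‖ = ∑' n, |f n| := (habs f).tsum_eq.symm

lemma single_app (N : ℕ) (c : ℝ) (n : ℕ) :
    (lp.single (E := fun _ : ℕ => ℝ) 1 N c) n = if n = N then c else 0 := by
  rw [lp.single_apply]
  split_ifs with h
  · subst h; simp
  · simp [h]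

lemma tsum_two (f : ℕ → ℝ) {M Q : ℕ} (h : M ≠ Q)
    (h0 : ∀ n, n ≠ M → n ≠ Q → f n = 0) : ∑' n, f n = f M + f Q := by
  rw [tsum_eq_sum (s := {M, Q}) (fun b hb => by
    simp only [Finset.mem_insert, Finset.mem_singleton, not_or] at hb
    exact h0 b hb.1 hb.2)]
  rw [Finset.sum_pair h]

lemma norm_two (f : E) {M Q : ℕ} (h : M ≠ Q)
    (h0 : ∀ n, n ≠ M → n ≠ Q → f n = 0) : ‖f‖ = |f M| + |f Q| := by
  rw [norm1, tsum_two (fun n => |f n|) h (fun n h1 h2 => by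
    simp only [h0 n h1 h2, abs_zero])]

lemma norm_sub_single (x : E) (N : ℕ) (c : ℝ) :
    ‖x - lp.single 1 N c‖ = ‖x‖ - |x N| + |x N - c| := by
  have hx := habs x
  have hs : Summable fun n => |x n - (lp.single (E := fun _ : ℕ => ℝ) 1 N c) n| := by
    have := (habs (x - lp.single 1 N c)).summable
    simpa [lp.coeFn_sub, Pi.sub_apply] using this
  have key : ‖x - lp.single 1 N c‖ =
      ∑' n, |x n - (lp.single (E := fun _ : ℕ => ℝ) 1 N c) n| := by
    rw [norm1]
    apply tsum_congr; intro n
    simp [lp.coeFn_sub]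
  rw [key, Summable.tsum_eq_add_tsum_ite hs N, norm1 x, Summable.tsum_eq_add_tsum_ite hx.summable N]
  have : (∑' n, if n = N then 0 else |x n - (lp.single (E := fun _ : ℕ => ℝ) 1 N c) n|)
      = ∑' n, if n = N then 0 else |x n| := by
    congr 1; funext n
    by_cases h : n = N <;> simp [h, single_app]
  rw [this, single_app]
  simp
  ring

lemma single_memK {N : ℕ} {c : ℝ} (h0 : 0 ≤ c) (h1 : c ≤ 1) :
    (lp.single (E := fun _ : ℕ => ℝ) 1 N c) ∈
      {x : E | (∀ n, 0 ≤ x n) ∧ (∑' n, x n) ≤ 1} := by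
  constructor
  · intro n
    rw [single_app]
    split_ifs <;> simp [h0]
  · rw [tsum_eq_single N (fun b hb => by simp [single_app, hb])]
    simpa [single_app] using h1

lemma add_single_memK {M Q : ℕ} (h : M ≠ Q) {a b : ℝ} (ha : 0 ≤ a) (hb : 0 ≤ b)
    (hab : a + b ≤ 1) :
    (lp.single (E := fun _ : ℕ => ℝ) 1 M a + lp.single (E := fun _ : ℕ => ℝ) 1 Q b) ∈
      {x : E | (∀ n, 0 ≤ x n) ∧ (∑' n, x n) ≤ 1} := by
  have happ : ∀ n, (lp.single (E := fun _ : ℕ => ℝ) 1 M a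
      + lp.single (E := fun _ : ℕ => ℝ) 1 Q b) n
      = (if n = M then a else 0) + (if n = Q then b else 0) := by
    intro n; simp [lp.coeFn_add, single_app, Pi.single_apply]
  constructor
  · intro n
    rw [happ]
    positivity
  · rw [tsum_two _ h (fun n h1 h2 => by simp [happ, h1, h2])]
    simpa [happ, h, Ne.symm h] using hab

end Stmt14Aux

open Stmt14Aux in
/-- Proposition 5.7, ℓ¹ case: let `K` be the positive part of the closed unit
ball of `ℓ¹`. If `ω` is a modulus of continuity with `ω 1 = 0` and `T : K → K` is
`ω`-nonexpansive, then `T` is constant on `K`. -/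
theorem stmt14 (ω : ℝ → ℝ) (hωc : Continuous ω) (hωnn : ∀ t, 0 ≤ t → 0 ≤ ω t)
    (hω0 : ω 0 = 0) (hω1 : ω 1 = 0)
    (K : Set (lp (fun _ : ℕ => ℝ) 1))
    (hK : K = {x : lp (fun _ : ℕ => ℝ) 1 | (∀ n, 0 ≤ x n) ∧ (∑' n, x n) ≤ 1})
    (T : lp (fun _ : ℕ => ℝ) 1 → lp (fun _ : ℕ => ℝ) 1)
    (hT : Set.MapsTo T K K)
    (hlip : ∀ x ∈ K, ∀ y ∈ K, ‖T x - T y‖ ≤ ω ‖x - y‖) :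
    ∀ x ∈ K, ∀ y ∈ K, T x = T y := by
  subst hK
  have step : ∀ u ∈ {x : E | (∀ n, 0 ≤ x n) ∧ (∑' n, x n) ≤ 1},
      ∀ v ∈ {x : E | (∀ n, 0 ≤ x n) ∧ (∑' n, x n) ≤ 1}, ‖u - v‖ = 1 → T u = T v := by
    intro u hu v hv h1
    have h := hlip u hu v hv
    rw [h1, hω1] at h
    have h2 := le_antisymm h (norm_nonneg _)
    rwa [norm_eq_zero, sub_eq_zero] at h2
  have h0K : (0 : E) ∈ {x : E | (∀ n, 0 ≤ x n) ∧ (∑' n, x n) ≤ 1} := by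
    constructor
    · intro n; simp [lp.coeFn_zero]
    · simp [lp.coeFn_zero]
  suffices hsuf : ∀ x ∈ {x : E | (∀ n, 0 ≤ x n) ∧ (∑' n, x n) ≤ 1}, T x = T 0 by
    intro x hx y hy
    rw [hsuf x hx, hsuf y hy]
  intro x hx
  obtain ⟨hxpos, hxsum⟩ := hx
  have hxnorm : ‖x‖ ≤ 1 := by
    rw [norm1]
    calc ∑' n, |x n| = ∑' n, x n := tsum_congr fun n => abs_of_nonneg (hxpos n)
    _ ≤ 1 := hxsum
  rcases eq_or_lt_of_le (norm_nonneg x) with hx0 | hx0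
  · rw [(norm_eq_zero.mp hx0.symm : x = 0)]
  -- choose N with x N ≤ ‖x‖ / 2
  obtain ⟨N, hN⟩ : ∃ N, x N ≤ ‖x‖ / 2 := by
    have ht : Filter.Tendsto (fun n => |x n|) Filter.atTop (nhds 0) :=
      (habs x).summable.tendsto_atTop_zero
    obtain ⟨N, hN⟩ := (ht.eventually_lt_const (by linarith : (0:ℝ) < ‖x‖ / 2)).exists
    exact ⟨N, le_of_lt (lt_of_le_of_lt (le_abs_self _) hN)⟩
  have hxN : 0 ≤ x N := hxpos N
  set c : ℝ := 1 - ‖x‖ + 2 * x N with hc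
  have hc0 : 0 ≤ c := by simp only [hc]; linarith
  have hc1 : c ≤ 1 := by simp only [hc]; linarith
  set s : ℝ := (1 - c) / 2 with hsdef
  have hs0 : 0 ≤ s := by simp only [hsdef]; linarith
  have hs1 : s ≤ 1 := by simp only [hsdef]; linarith
  set z : E := lp.single 1 N c with hz
  set w : E := lp.single 1 (N + 1) (1 - c) with hw
  set w' : E := lp.single (E := fun _ : ℕ => ℝ) 1 (N + 1) s
      + lp.single (E := fun _ : ℕ => ℝ) 1 (N + 2) (1 - s) with hw'
  have hzK := single_memK (N := N) hc0 hc1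
  have hwK := single_memK (N := N + 1) (by linarith : (0:ℝ) ≤ 1 - c) (by linarith)
  have hw'K := add_single_memK (M := N + 1) (Q := N + 2) (a := s) (b := 1 - s)
    (by omega) hs0 (by linarith) (by linarith)
  have e1 : T x = T z := by
    apply step x ⟨hxpos, hxsum⟩ z hzK
    rw [hz, norm_sub_single, abs_of_nonneg hxN, abs_sub_comm,
      abs_of_nonneg (by simp only [hc]; linarith : (0:ℝ) ≤ c - x N)]
    simp only [hc]; ring
  have e2 : T z = T w := by
    apply step z hzK w hwK
    rw [norm_two (z - w) (M := N) (Q := N + 1) (by omega)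
      (fun n h1 h2 => by simp [hz, hw, lp.coeFn_sub, single_app, h1, h2])]
    have hN1 : (N : ℕ) ≠ N + 1 := by omega
    have hval1 : (z - w) N = c := by
      simp [hz, hw, lp.coeFn_sub, single_app, hN1, Ne.symm hN1]
    have hval2 : (z - w) (N + 1) = -(1 - c) := by
      simp [hz, hw, lp.coeFn_sub, single_app, hN1, Ne.symm hN1]
    rw [hval1, hval2, abs_neg, abs_of_nonneg hc0,
      abs_of_nonneg (by linarith : (0:ℝ) ≤ 1 - c)]
    ring
  have e3 : T w = T w' := by
    apply step w hwK w' hw'K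
    rw [norm_two (w - w') (M := N + 1) (Q := N + 2) (by omega)
      (fun n h1 h2 => by simp [hw, hw', lp.coeFn_sub, lp.coeFn_add, single_app, h1, h2])]
    have h12 : (N + 1 : ℕ) ≠ N + 2 := by omega
    have hval1 : (w - w') (N + 1) = (1 - c) - s := by
      simp [hw, hw', lp.coeFn_sub, lp.coeFn_add, single_app, h12, Ne.symm h12]
    have hval2 : (w - w') (N + 2) = -(1 - s) := by
      simp [hw, hw', lp.coeFn_sub, lp.coeFn_add, single_app, h12, Ne.symm h12]
    rw [hval1, hval2, abs_neg,
      abs_of_nonneg (by simp only [hsdef]; linarith : (0:ℝ) ≤ (1 - c) - s),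
      abs_of_nonneg (by linarith : (0:ℝ) ≤ 1 - s)]
    simp only [hsdef]; ring
  have e4 : T w' = T 0 := by
    apply step w' hw'K 0 h0K
    rw [sub_zero, norm_two w' (M := N + 1) (Q := N + 2) (by omega)
      (fun n h1 h2 => by simp [hw', lp.coeFn_add, single_app, h1, h2])]
    have h12 : (N + 1 : ℕ) ≠ N + 2 := by omega
    have hval1 : w' (N + 1) = s := by
      simp [hw', lp.coeFn_add, single_app, h12, Ne.symm h12]
    have hval2 : w' (N + 2) = 1 - s := by
      simp [hw', lp.coeFn_add, single_app, h12, Ne.symm h12]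
    rw [hval1, hval2, abs_of_nonneg hs0, abs_of_nonneg (by linarith : (0:ℝ) ≤ 1 - s)]
    ring
  rw [e1, e2, e3, e4]
end

section
/- Let K be a bounded convex subset of a real Banach space and T : K → K satisfy ‖Tx − Ty‖ ≤ L‖x−y‖ + ω(‖x−y‖) for all x,y ∈ K, where L ∈ [0,1] and ω is a modulus of continuity such that δ ↦ ω(δ)/δ is nonincreasing on (0,1] and limsup_{δ→0} ω(δ)/δ ≤ 1 − L. Then T is nonexpansive: ‖Tx − Ty‖ ≤ ‖x − y‖ for all x, y ∈ K. -/
/-- Lemma 5.13-(iii): if `T : K → K` is `L`-`ω`-nonexpansive on a bounded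
convex set `K` with `L ∈ [0,1]`, `δ ↦ ω δ / δ` nonincreasing on `(0,1]` and
`limsup_{δ→0} ω δ / δ ≤ 1 - L`, then `T` is nonexpansive. -/
theorem stmt16 {X : Type*} [NormedAddCommGroup X] [NormedSpace ℝ X] [CompleteSpace X]
    (K : Set X) (hconv : Convex ℝ K) (hbdd : Bornology.IsBounded K)
    (T : X → X) (hT : Set.MapsTo T K K)
    (L : ℝ) (hL : L ∈ Set.Icc (0:ℝ) 1)
    (ω : ℝ → ℝ) (hωc : Continuous ω) (hωnn : ∀ t, 0 ≤ t → 0 ≤ ω t) (hω0 : ω 0 = 0)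
    (hratio : ∀ a b : ℝ, 0 < a → a ≤ b → b ≤ 1 → ω b / b ≤ ω a / a)
    (hlimsup : ∀ ε > (0:ℝ), ∃ δ₀ > (0:ℝ), ∀ δ : ℝ, 0 < δ → δ < δ₀ → ω δ / δ ≤ 1 - L + ε)
    (hlip : ∀ x ∈ K, ∀ y ∈ K, ‖T x - T y‖ ≤ L * ‖x - y‖ + ω ‖x - y‖) :
    ∀ x ∈ K, ∀ y ∈ K, ‖T x - T y‖ ≤ ‖x - y‖ := by
  have hkey : ∀ d : ℝ, 0 < d → d ≤ 1 → ω d ≤ (1 - L) * d := by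
    intro d hd hd1
    have h1 : ω d / d ≤ 1 - L := by
      by_contra h
      push_neg at h
      have hεpos : 0 < ω d / d - (1 - L) := by linarith
      set ε := ω d / d - (1 - L) with hε
      obtain ⟨δ₀, hδ₀, hδ⟩ := hlimsup (ε / 2) (by linarith)
      set δ := min (δ₀ / 2) d with hδdef
      have hδpos : 0 < δ := lt_min (by linarith) hd
      have hδlt : δ < δ₀ := lt_of_le_of_lt (min_le_left _ _) (by linarith)
      have h2 := hδ δ hδpos hδlt
      have h3 := hratio δ d hδpos (min_le_right _ _) hd1
      linarith
    calc ω d = (ω d / d) * d := by field_simp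
    _ ≤ (1 - L) * d := mul_le_mul_of_nonneg_right h1 hd.le
  have step : ∀ x ∈ K, ∀ y ∈ K, ‖x - y‖ ≤ 1 → ‖T x - T y‖ ≤ ‖x - y‖ := by
    intro x hx y hy hd1
    rcases eq_or_lt_of_le (norm_nonneg (x - y)) with h0 | h0
    · have hxy : x = y := by
        have : ‖x - y‖ = 0 := h0.symm
        rwa [norm_eq_zero, sub_eq_zero] at this
      simp [hxy]
    · have hl := hlip x hx y hy
      have hk := hkey ‖x - y‖ h0 hd1
      nlinarith [hL.1, hL.2]
  have main : ∀ n : ℕ, ∀ x ∈ K, ∀ y ∈ K, ‖x - y‖ ≤ n + 1 → ‖T x - T y‖ ≤ ‖x - y‖ := by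
    intro n
    induction n with
    | zero => intro x hx y hy h; exact step x hx y hy (by simpa using h)
    | succ n ih =>
      intro x hx y hy h
      rcases le_or_gt ‖x - y‖ (n + 1) with h1 | h1
      · exact ih x hx y hy h1
      · set d := ‖x - y‖ with hdd
        have hd1 : 1 < d := by
          have hn : (0:ℝ) ≤ (n : ℝ) := Nat.cast_nonneg n
          linarith
        have hdpos : 0 < d := by linarith
        set t := (d - 1) / d with ht
        have ht0 : 0 ≤ t := div_nonneg (by linarith) hdpos.le
        have ht1 : t ≤ 1 := by rw [div_le_one hdpos]; linarith
        set m := x + t • (y - x) with hm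
        have hmK : m ∈ K := by
          have hc := hconv hx hy (by linarith : (0:ℝ) ≤ 1 - t) ht0 (by ring)
          have : (1 - t) • x + t • y = m := by rw [hm]; module
          rwa [this] at hc
        have hyx : ‖y - x‖ = d := by rw [norm_sub_rev]
        have hxm : ‖x - m‖ = d - 1 := by
          have hxe : x - m = (-t) • (y - x) := by rw [hm]; module
          rw [hxe, norm_smul, hyx, norm_neg, Real.norm_eq_abs, abs_of_nonneg ht0, ht]
          field_simp
        have hmy : ‖m - y‖ = 1 := by
          have hme : m - y = (1 - t) • (x - y) := by rw [hm]; module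
          rw [hme, norm_smul, Real.norm_eq_abs, abs_of_nonneg (by linarith : (0:ℝ) ≤ 1 - t), ht]
          field_simp
          rw [← hdd]; ring
        have hIH : ‖T x - T m‖ ≤ ‖x - m‖ := by
          apply ih x hx m hmK
          rw [hxm]
          push_cast at h ⊢
          linarith
        have hst : ‖T m - T y‖ ≤ ‖m - y‖ := step m hmK y hy (le_of_eq hmy)
        calc ‖T x - T y‖ ≤ ‖T x - T m‖ + ‖T m - T y‖ := norm_sub_le_norm_sub_add_norm_sub _ _ _
        _ ≤ ‖x - m‖ + ‖m - y‖ := add_le_add hIH hst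
        _ = d := by rw [hxm, hmy]; ring
  intro x hx y hy
  apply main ⌈‖x - y‖⌉₊ x hx y hy
  have := Nat.le_ceil ‖x - y‖
  linarith
end
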